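/- For every n ∈ ℕ and every subset A of (ℕ∞)^n, where ℕ∞ = ℕ ∪ {ℵ₀} is ordered with ℵ₀ above every natural number and tuples are ordered componentwise ((p₁,…,pₙ) ≤ (q₁,…,qₙ) iff pᵢ ≤ qᵢ for all 1 ≤ i ≤ n), the set of maximal elements of A with respect to this order is finite. -/

import Mathlib

/-- Dickson-type lemma: for every `n` and every subset `A` of `(ℕ∞)ⁿ` (ordered
componentwise, with `ℵ₀ = ⊤` above every natural number), the set of maximal elements
of `A` is finite. -/
theorem stmt_0 (n : ℕ) (A : Set (Fin n → ℕ∞)) :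
    {a : Fin n → ℕ∞ | Maximal (· ∈ A) a}.Finite := by
  have hanti : IsAntichain (· ≤ ·) {a : Fin n → ℕ∞ | Maximal (· ∈ A) a} := by
    intro a ha b hb hne hle
    exact hne (le_antisymm hle (ha.2 hb.1 hle))
  haveI : IsWellOrder ℕ∞ (· < ·) := ⟨⟩
  exact hanti.finite_of_partiallyWellOrderedOn
    ((Set.isPWO_of_wellQuasiOrderedLE _).mono (Set.subset_univ _))
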